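/- For every integer h ≥ 1 and every prime p, every PFA over the alphabet {0,1} that recognizes L(h,p) with an isolated cut-point (i.e., with cut-point λ isolated by ε for some λ ∈ (0,1) and ε > 0) has at least p states. -/

import Mathlib

noncomputable section

/-- The `n`-dimensional complex Hilbert space `ℂⁿ`. -/
abbrev QState (n : ℕ) := EuclideanSpace ℂ (Fin n)

/-- Apply a matrix to a vector of `ℂⁿ`. -/
def mApply {n : ℕ} (M : Matrix (Fin n) (Fin n) ℂ) (v : QState n) : QState n :=
  Matrix.toEuclideanLin M v

/-- A PFA with `n` states: an initial distribution, a row-stochastic matrix for each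
letter, and a set of accepting states. -/
structure PFA (Alph : Type) (n : ℕ) where
  ρ : Fin n → ℝ
  ρ_nonneg : ∀ i, 0 ≤ ρ i
  ρ_sum : ∑ i, ρ i = 1
  M : Alph → Matrix (Fin n) (Fin n) ℝ
  M_nonneg : ∀ σ i j, 0 ≤ M σ i j
  M_stochastic : ∀ σ i, ∑ j, M σ i j = 1
  F : Finset (Fin n)

namespace PFA
variable {Alph : Type} {n : ℕ}

/-- `ρ M(σ₁) ⋯ M(σ_m) η_F`. -/
def probAcc (A : PFA Alph n) (x : List Alph) : ℝ :=
  dotProduct (x.foldl (fun v σ => Matrix.vecMul v (A.M σ)) A.ρ)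
    (fun i => if i ∈ A.F then 1 else 0)

def Recognizes (A : PFA Alph n) (L : Set (List Alph)) (lam ε : ℝ) : Prop :=
  (∀ x ∈ L, lam + ε ≤ A.probAcc x) ∧ (∀ x ∉ L, A.probAcc x ≤ lam - ε)

end PFA

/-- The blocks `1^a 0^b 1 0^h` with `a ≥ 0`, `b ≥ 1`; `true` = 1, `false` = 0. -/
def blockLang (h : ℕ) : Set (List Bool) :=
  {w | ∃ a b : ℕ, 1 ≤ b ∧
    w = List.replicate a true ++ List.replicate b false ++ [true] ++ List.replicate h false}

/-- Kleene star of a set of strings. -/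
def kleeneStar (P : Set (List Bool)) : Set (List Bool) :=
  {x | ∃ l : List (List Bool), (∀ w ∈ l, w ∈ P) ∧ x = l.flatten}

/-- `L(h,p) = (1*00*10^h)* ∩ {w : |w| ≡ 0 (mod p)}`. -/
def Lhp (h p : ℕ) : Set (List Bool) :=
  {w | w ∈ kleeneStar (blockLang h) ∧ w.length % p = 0}

namespace Stmt15Aux

open Matrix Filter

variable {n : ℕ}

def Complex.abs : AbsoluteValue ℂ ℝ where
  toFun z := ‖z‖
  map_mul' := norm_mul
  nonneg' := norm_nonneg
  eq_zero' _ := norm_eq_zero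
  add_le' := norm_add_le

@[simp] lemma Complex.abs_apply (z : ℂ) : Complex.abs z = ‖z‖ := rfl

lemma Complex.norm_eq_abs (z : ℂ) : ‖z‖ = Complex.abs z := rfl

lemma Complex.abs_ofReal (r : ℝ) : Complex.abs (r : ℂ) = |r| := by simp

lemma Complex.abs_conj (z : ℂ) : Complex.abs (starRingEnd ℂ z) = Complex.abs z := by simp

lemma Complex.abs_natCast (k : ℕ) : Complex.abs (k : ℂ) = k := by simp

lemma Complex.re_le_abs (z : ℂ) : z.re ≤ Complex.abs z := _root_.Complex.re_le_norm z

lemma Complex.sq_abs (z : ℂ) : Complex.abs z ^ 2 = Complex.normSq z := _root_.Complex.sq_norm z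

/-- Row-stochastic real matrix. -/
def Stoch {n : ℕ} (M : Matrix (Fin n) (Fin n) ℝ) : Prop :=
  (∀ i j, 0 ≤ M i j) ∧ ∀ i, ∑ j, M i j = 1

lemma Stoch.one : Stoch (1 : Matrix (Fin n) (Fin n) ℝ) := by
  constructor
  · intro i j
    by_cases h : i = j <;> simp [Matrix.one_apply, h]
  · intro i; simp [Matrix.one_apply]

lemma Stoch.mul {M N : Matrix (Fin n) (Fin n) ℝ} (hM : Stoch M) (hN : Stoch N) :
    Stoch (M * N) := by
  constructor
  · intro i j
    rw [Matrix.mul_apply]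
    exact Finset.sum_nonneg fun k _ => mul_nonneg (hM.1 i k) (hN.1 k j)
  · intro i
    simp only [Matrix.mul_apply]
    rw [Finset.sum_comm]
    calc ∑ k, ∑ j, M i k * N k j = ∑ k, M i k * ∑ j, N k j := by
          simp [Finset.mul_sum]
      _ = 1 := by simp only [hN.2]; simpa using hM.2 i

lemma Stoch.pow {M : Matrix (Fin n) (Fin n) ℝ} (hM : Stoch M) (k : ℕ) : Stoch (M ^ k) := by
  induction k with
  | zero => simpa using Stoch.one
  | succ k ih => rw [pow_succ]; exact ih.mul hM

lemma Stoch.listProd (l : List (Matrix (Fin n) (Fin n) ℝ)) (h : ∀ M ∈ l, Stoch M) :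
    Stoch l.prod := by
  induction l with
  | nil => simpa using Stoch.one
  | cons M l ih =>
    rw [List.prod_cons]
    exact (h M (by simp)).mul (ih fun N hN => h N (by simp [hN]))

/-- Complexification of a real matrix. -/
def cm {n : ℕ} (M : Matrix (Fin n) (Fin n) ℝ) : Matrix (Fin n) (Fin n) ℂ :=
  M.map (Complex.ofRealHom : ℝ →+* ℂ)

lemma cm_apply (M : Matrix (Fin n) (Fin n) ℝ) (i j : Fin n) :
    cm M i j = ((M i j : ℝ) : ℂ) := rfl

lemma cm_mul (M N : Matrix (Fin n) (Fin n) ℝ) : cm (M * N) = cm M * cm N :=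
  Matrix.map_mul

lemma cm_one : cm (1 : Matrix (Fin n) (Fin n) ℝ) = 1 :=
  Matrix.map_one _ (map_zero _) (map_one _)

lemma cm_pow (M : Matrix (Fin n) (Fin n) ℝ) (k : ℕ) : cm (M ^ k) = cm M ^ k := by
  induction k with
  | zero => simpa using cm_one
  | succ k ih => rw [pow_succ, cm_mul, ih, pow_succ]

/-- max coordinate modulus -/
def vsup {n : ℕ} (hn : 0 < n) (z : Fin n → ℂ) : ℝ :=
  Finset.univ.sup' (Finset.univ_nonempty_iff.2 (Fin.pos_iff_nonempty.1 hn))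
    fun i => Complex.abs (z i)

lemma le_vsup (hn : 0 < n) (z : Fin n → ℂ) (i : Fin n) :
    Complex.abs (z i) ≤ vsup hn z := by
  exact Finset.le_sup' (fun i => Complex.abs (z i)) (Finset.mem_univ i)

lemma exists_vsup (hn : 0 < n) (z : Fin n → ℂ) : ∃ i, vsup hn z = Complex.abs (z i) := by
  obtain ⟨i, -, h⟩ := Finset.exists_mem_eq_sup' (Finset.univ_nonempty_iff.2
    (Fin.pos_iff_nonempty.1 hn)) fun i => Complex.abs (z i)
  exact ⟨i, h⟩

lemma vsup_nonneg (hn : 0 < n) (z : Fin n → ℂ) : 0 ≤ vsup hn z := by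
  obtain ⟨i, h⟩ := exists_vsup hn z
  rw [h]; exact AbsoluteValue.nonneg _ _

lemma stoch_bound (hn : 0 < n) {M : Matrix (Fin n) (Fin n) ℝ} (hM : Stoch M)
    (z : Fin n → ℂ) (i : Fin n) :
    Complex.abs ((cm M *ᵥ z) i) ≤ vsup hn z := by
  have h1 : (cm M *ᵥ z) i = ∑ j, (M i j : ℂ) * z j := by
    simp [Matrix.mulVec, dotProduct, cm_apply]
  rw [h1]
  calc Complex.abs (∑ j, (M i j : ℂ) * z j) ≤ ∑ j, Complex.abs ((M i j : ℂ) * z j) :=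
        AbsoluteValue.sum_le _ _ _
    _ = ∑ j, M i j * Complex.abs (z j) := by
        refine Finset.sum_congr rfl fun j _ => ?_
        rw [_root_.map_mul, Complex.abs_ofReal, abs_of_nonneg (hM.1 i j)]
    _ ≤ ∑ j, M i j * vsup hn z :=
        Finset.sum_le_sum fun j _ =>
          mul_le_mul_of_nonneg_left (le_vsup hn z j) (hM.1 i j)
    _ = vsup hn z := by rw [← Finset.sum_mul, hM.2 i, one_mul]


lemma eig_le_one (hn : 0 < n) {M : Matrix (Fin n) (Fin n) ℝ} (hM : Stoch M)
    {μ : ℂ} {v : Fin n → ℂ} (hv : cm M *ᵥ v = μ • v) (hv0 : v ≠ 0) :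
    Complex.abs μ ≤ 1 := by
  obtain ⟨i, hi⟩ := exists_vsup hn v
  have hcpos : 0 < vsup hn v := by
    obtain ⟨j, hj⟩ := Function.ne_iff.1 hv0
    calc (0:ℝ) < Complex.abs (v j) := by simpa using hj
      _ ≤ vsup hn v := le_vsup hn v j
  have h1 : Complex.abs μ * vsup hn v ≤ 1 * vsup hn v := by
    rw [one_mul, hi, ← _root_.map_mul]
    have : μ * v i = (cm M *ᵥ v) i := by rw [hv]; simp
    rw [this]
    exact (stoch_bound hn hM v i).trans hi.le
  exact le_of_mul_le_mul_right h1 hcpos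

lemma eig_root (hn : 0 < n) {M : Matrix (Fin n) (Fin n) ℝ} (hM : Stoch M)
    {μ : ℂ} {v : Fin n → ℂ} (hv : cm M *ᵥ v = μ • v) (hv0 : v ≠ 0)
    (habs : Complex.abs μ = 1) : μ ^ (Nat.factorial n) = 1 := by
  set c := vsup hn v with hc
  have hcpos : 0 < c := by
    obtain ⟨j, hj⟩ := Function.ne_iff.1 hv0
    calc (0:ℝ) < Complex.abs (v j) := by simpa using hj
      _ ≤ c := le_vsup hn v j
  -- key local step
  have key : ∀ i, Complex.abs (v i) = c → ∀ j, M i j ≠ 0 →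
      v j = μ * v i ∧ Complex.abs (v j) = c := by
    intro i hi j hj
    set u := μ * v i with hu
    have hu_abs : Complex.abs u = c := by rw [hu, _root_.map_mul, habs, one_mul, hi]
    have hu0 : u ≠ 0 := by
      intro h; rw [h] at hu_abs; simp at hu_abs; exact hcpos.ne' (by rw [← hu_abs])
    have hrow : ∑ k, (M i k : ℂ) * v k = u := by
      have h2 := congrFun hv i
      have h3 : (cm M *ᵥ v) i = ∑ k, (M i k : ℂ) * v k := by
        simp [Matrix.mulVec, dotProduct, cm_apply]
      rw [h3] at h2
      simpa [hu] using h2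
    have hcsum : ∑ k, M i k * (starRingEnd ℂ u * v k).re = c ^ 2 := by
      have h4 : ∑ k, (M i k : ℂ) * (starRingEnd ℂ u * v k) = (c:ℂ) ^ 2 := by
        have : ∑ k, (M i k : ℂ) * (starRingEnd ℂ u * v k)
            = starRingEnd ℂ u * ∑ k, (M i k : ℂ) * v k := by
          rw [Finset.mul_sum]; refine Finset.sum_congr rfl fun k _ => by ring
        rw [this, hrow]
        have h5 : starRingEnd ℂ u * u = (Complex.abs u : ℂ) ^ 2 := by
          rw [mul_comm, Complex.mul_conj', Complex.norm_eq_abs]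
        rw [h5, hu_abs]
      have h6 := congrArg Complex.re h4
      simpa [Complex.re_sum, Complex.mul_re, Complex.ofReal_re, Complex.ofReal_im,
        ← Complex.ofReal_pow] using h6
    have hterm_le : ∀ k, (starRingEnd ℂ u * v k).re ≤ c ^ 2 := by
      intro k
      calc (starRingEnd ℂ u * v k).re ≤ Complex.abs (starRingEnd ℂ u * v k) :=
            Complex.re_le_abs _
        _ = c * Complex.abs (v k) := by
            rw [_root_.map_mul, Complex.abs_conj, hu_abs]
        _ ≤ c * c := mul_le_mul_of_nonneg_left (le_vsup hn v k) hcpos.le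
        _ = c ^ 2 := (sq c).symm
    have heq : ∀ k ∈ Finset.univ, M i k * (starRingEnd ℂ u * v k).re = M i k * c ^ 2 := by
      rw [← Finset.sum_eq_sum_iff_of_le]
      · rw [hcsum, ← Finset.sum_mul, hM.2 i, one_mul]
      · intro k _
        exact mul_le_mul_of_nonneg_left (hterm_le k) (hM.1 i k)
    have hre : (starRingEnd ℂ u * v j).re = c ^ 2 :=
      mul_left_cancel₀ hj (heq j (Finset.mem_univ j))
    have habsle : Complex.abs (starRingEnd ℂ u * v j) ≤ c ^ 2 := by
      rw [_root_.map_mul, Complex.abs_conj, hu_abs]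
      calc c * Complex.abs (v j) ≤ c * c :=
            mul_le_mul_of_nonneg_left (le_vsup hn v j) hcpos.le
        _ = c ^ 2 := (sq c).symm
    have him : (starRingEnd ℂ u * v j).im = 0 := by
      have h7 : Complex.abs (starRingEnd ℂ u * v j) ^ 2
          = (starRingEnd ℂ u * v j).re ^ 2 + (starRingEnd ℂ u * v j).im ^ 2 := by
        rw [Complex.sq_abs, Complex.normSq_apply]; ring
      nlinarith [AbsoluteValue.nonneg Complex.abs (starRingEnd ℂ u * v j), hre,
        sq_nonneg ((starRingEnd ℂ u * v j).im)]
    have hw : starRingEnd ℂ u * v j = (c:ℂ) ^ 2 := by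
      apply Complex.ext <;> simp [hre, him, ← Complex.ofReal_pow]
    have hvj : v j = u := by
      have h8 : starRingEnd ℂ u * u = (c:ℂ) ^ 2 := by
        rw [mul_comm, Complex.mul_conj', Complex.norm_eq_abs, hu_abs]
      have := hw.trans h8.symm
      exact mul_left_cancel₀ (by simpa using hu0) this
    refine ⟨by rw [hvj, hu], by rw [hvj, hu_abs]⟩
  -- now iterate
  have hμ0 : μ ≠ 0 := by
    intro h; rw [h] at habs; simp at habs
  obtain ⟨i₀, hi₀⟩ := exists_vsup hn v
  have hnext : ∀ i : Fin n, ∃ j, M i j ≠ 0 := by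
    intro i
    obtain ⟨j, -, hj⟩ := Finset.exists_ne_zero_of_sum_ne_zero
      (by rw [hM.2 i]; exact one_ne_zero : ∑ j, M i j ≠ 0)
    exact ⟨j, hj⟩
  let nxt : Fin n → Fin n := fun i => (hnext i).choose
  have hnxt : ∀ i, M i (nxt i) ≠ 0 := fun i => (hnext i).choose_spec
  let seq : ℕ → Fin n := fun t => nxt^[t] i₀
  have hseq : ∀ t, Complex.abs (v (seq t)) = c ∧ v (seq t) = μ ^ t * v i₀ := by
    intro t
    induction t with
    | zero => exact ⟨hi₀.symm, by simp [seq]⟩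
    | succ t ih =>
      have hstep := key (seq t) ih.1 (nxt (seq t)) (hnxt (seq t))
      have hs : seq (t + 1) = nxt (seq t) := Function.iterate_succ_apply' nxt t i₀
      refine ⟨by rw [hs]; exact hstep.2, ?_⟩
      rw [hs, hstep.1, ih.2, pow_succ]
      ring
  have hv0' : v i₀ ≠ 0 := by
    intro h
    have := hi₀
    rw [h] at this; simp at this
    exact hcpos.ne' (by rw [hc, this])
  obtain ⟨s, t, hst, hmap⟩ := Fintype.exists_ne_map_eq_of_card_lt
    (fun t : Fin (n + 1) => seq t) (by simp)
  -- wlog s < t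
  have main : ∀ s t : ℕ, s < t → t ≤ n → seq s = seq t → μ ^ (Nat.factorial n) = 1 := by
    intro s t hlt hle hseqeq
    have h1 : μ ^ s * v i₀ = μ ^ t * v i₀ := by
      rw [← (hseq s).2, ← (hseq t).2, hseqeq]
    have h2 : μ ^ s = μ ^ t := mul_right_cancel₀ hv0' h1
    have h4 : μ ^ (t - s) = 1 := by
      have h3 : μ ^ s * μ ^ (t - s) = μ ^ s * 1 := by
        rw [mul_one, ← pow_add, Nat.add_sub_cancel' hlt.le, h2]
      exact mul_left_cancel₀ (pow_ne_zero s hμ0) h3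
    obtain ⟨q, hq⟩ : (t - s) ∣ Nat.factorial n := Nat.dvd_factorial (by omega) (by omega)
    rw [hq, pow_mul, h4, one_pow]
  rcases lt_or_gt_of_ne hst with h | h
  · exact main s t h (by omega) hmap
  · exact main t s h (by omega) hmap.symm



lemma gpow_apply (M : Matrix (Fin n) (Fin n) ℝ) (k : ℕ) (z : Fin n → ℂ) :
    (((cm M).mulVecLin) ^ k) z = cm (M ^ k) *ᵥ z := by
  induction k generalizing z with
  | zero => simp [cm_one]
  | succ k ih =>
    rw [pow_succ, Module.End.mul_apply, Matrix.mulVecLin_apply, ih, Matrix.mulVec_mulVec,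
      ← cm_mul, ← pow_succ]

lemma gpow_bound (hn : 0 < n) {M : Matrix (Fin n) (Fin n) ℝ} (hM : Stoch M)
    (k : ℕ) (z : Fin n → ℂ) (i : Fin n) :
    Complex.abs (((((cm M).mulVecLin) ^ k) z) i) ≤ vsup hn z := by
  rw [gpow_apply]
  exact stoch_bound hn (hM.pow k) z i

lemma gen_to_eig {M : Matrix (Fin n) (Fin n) ℝ} {μ : ℂ} :
    ∀ (m : ℕ) (z : Fin n → ℂ), (((cm M).mulVecLin - μ • 1) ^ m) z = 0 → z ≠ 0 →
      ∃ w : Fin n → ℂ, w ≠ 0 ∧ cm M *ᵥ w = μ • w := by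
  intro m
  induction m with
  | zero => intro z hz hz0; exact absurd (by simpa using hz) hz0
  | succ m ih =>
    intro z hz hz0
    set g := (cm M).mulVecLin with hg
    by_cases h0 : (g - μ • 1) z = 0
    · refine ⟨z, hz0, ?_⟩
      have h1 : g z - μ • z = 0 := by
        simpa [LinearMap.sub_apply, LinearMap.smul_apply, Module.End.one_apply] using h0
      have h2 : g z = μ • z := sub_eq_zero.1 h1
      exact h2
    · refine ih ((g - μ • 1) z) ?_ h0
      have : ((g - μ • 1) ^ m) ((g - μ • 1) z) = ((g - μ • 1) ^ (m + 1)) z := by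
        rw [pow_succ, Module.End.mul_apply]
      rw [this, hz]


lemma unit_gen_eig (hn : 0 < n) {M : Matrix (Fin n) (Fin n) ℝ} (hM : Stoch M)
    {μ : ℂ} (habs : Complex.abs μ = 1) :
    ∀ (m : ℕ) (x : Fin n → ℂ), (((cm M).mulVecLin - μ • 1) ^ m) x = 0 →
      (cm M).mulVecLin x = μ • x := by
  intro m
  induction m with
  | zero =>
    intro x hx
    have : x = 0 := by simpa using hx
    simp [this]
  | succ m ih =>
    intro x hx
    set g := (cm M).mulVecLin with hg
    set x' := (g - μ • 1) x with hx'def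
    have hx'gen : ((g - μ • 1) ^ m) x' = 0 := by
      rw [hx'def, ← Module.End.mul_apply, ← pow_succ, hx]
    have heig' : g x' = μ • x' := ih x' hx'gen
    have hgx : g x = μ • x + x' := by
      rw [hx'def]
      simp [LinearMap.sub_apply, LinearMap.smul_apply, Module.End.one_apply]
    by_cases h0 : x' = 0
    · rw [hgx, h0, add_zero]
    · exfalso
      have hiter : ∀ k : ℕ, (g ^ (k + 1)) x = μ ^ (k + 1) • x + ((k + 1 : ℂ) * μ ^ k) • x' := by
        intro k
        induction k with
        | zero => simpa using hgx
        | succ k ihk =>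
          have hstep : (g ^ (k + 2)) x = g ((g ^ (k + 1)) x) := by
            rw [pow_succ', Module.End.mul_apply]
          rw [hstep, ihk, map_add, g.map_smul, g.map_smul, hgx, heig']
          push_cast
          module
      obtain ⟨i, hi⟩ := Function.ne_iff.1 h0
      have hapos : 0 < Complex.abs (x' i) := by simpa using hi
      have hbound : ∀ k : ℕ, ((k : ℝ) + 1) * Complex.abs (x' i) ≤ 2 * vsup hn x := by
        intro k
        have h1 : Complex.abs (((g ^ (k + 1)) x) i) ≤ vsup hn x := gpow_bound hn hM (k + 1) x i
        have h2 : ((g ^ (k + 1)) x) i = μ ^ (k + 1) * x i + ((k + 1 : ℂ) * μ ^ k) * x' i := by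
          rw [hiter k]; simp
        have h3 : Complex.abs (((k + 1 : ℂ) * μ ^ k) * x' i) = ((k : ℝ) + 1) * Complex.abs (x' i) := by
          rw [_root_.map_mul, _root_.map_mul, map_pow, habs, one_pow, mul_one]
          congr 1
          have : ((k : ℂ) + 1) = ((k + 1 : ℕ) : ℂ) := by push_cast; ring
          rw [this, Complex.abs_natCast]
          push_cast; ring
        have h4 : Complex.abs (μ ^ (k + 1) * x i) ≤ vsup hn x := by
          rw [_root_.map_mul, map_pow, habs, one_pow, one_mul]
          exact le_vsup hn x i
        have h5 : ((k : ℝ) + 1) * Complex.abs (x' i) ≤ vsup hn x + vsup hn x := by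
          rw [← h3]
          have hT : ((k + 1 : ℂ) * μ ^ k) * x' i
              = (((g ^ (k + 1)) x) i) - μ ^ (k + 1) * x i := by rw [h2]; ring
          rw [hT, sub_eq_add_neg]
          refine (Complex.abs.add_le _ _).trans ?_
          rw [Complex.abs.map_neg]
          exact add_le_add h1 h4
        linarith
      obtain ⟨k, hk⟩ := exists_nat_gt ((2 * vsup hn x) / Complex.abs (x' i))
      have := hbound k
      rw [div_lt_iff₀ hapos] at hk
      nlinarith [hapos]


lemma tendsto_pow_mul_pow_sub {r : ℝ} (j : ℕ) (h0 : 0 ≤ r) (h1 : r < 1) :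
    Filter.Tendsto (fun k : ℕ => (k : ℝ) ^ j * r ^ (k - j)) Filter.atTop (nhds 0) := by
  rcases eq_or_lt_of_le h0 with h | h
  · apply Filter.Tendsto.congr' _ tendsto_const_nhds
    filter_upwards [Filter.eventually_ge_atTop (j + 1)] with k hk
    rw [← h, zero_pow (by omega : k - j ≠ 0), mul_zero]
  · have h2 := (tendsto_pow_const_mul_const_pow_of_lt_one j h0 h1).mul_const ((r ^ j)⁻¹)
    rw [zero_mul] at h2
    apply Filter.Tendsto.congr' _ h2
    filter_upwards [Filter.eventually_ge_atTop j] with k hk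
    rw [mul_assoc]
    congr 1
    rw [pow_sub₀ r h.ne' hk]

lemma decay (hn : 0 < n) {M : Matrix (Fin n) (Fin n) ℝ} (hM : Stoch M)
    {μ : ℂ} (habs : Complex.abs μ < 1) (m : ℕ) (x : Fin n → ℂ)
    (hx : (((cm M).mulVecLin - μ • 1) ^ m) x = 0) (i : Fin n) :
    Filter.Tendsto (fun k => ((((cm M).mulVecLin) ^ k) x) i) Filter.atTop (nhds 0) := by
  set g := (cm M).mulVecLin with hg
  set a := g - μ • 1 with ha
  have hcomm : Commute a ((μ • 1 : Module.End ℂ (Fin n → ℂ))) :=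
    (Commute.one_right a).smul_right μ
  have hsum : ∀ k, (g ^ k) x = ∑ j ∈ Finset.range (k + 1),
      ((k.choose j : ℂ) * μ ^ (k - j)) • ((a ^ j) x) := by
    intro k
    have hgab : g = a + μ • 1 := by rw [ha]; abel
    have hbin := hcomm.add_pow k
    rw [← hgab] at hbin
    have happ := congrArg (fun f => f x) hbin
    simp only [LinearMap.sum_apply] at happ
    rw [happ]
    refine Finset.sum_congr rfl fun j hj => ?_
    -- (a^j * (μ•1)^(k-j) * choose) x
    have h1 : (a ^ j * (μ • 1 : Module.End ℂ (Fin n → ℂ)) ^ (k - j) * (k.choose j : Module.End ℂ (Fin n → ℂ))) x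
        = (a ^ j) (((μ • 1 : Module.End ℂ (Fin n → ℂ)) ^ (k - j)) ((k.choose j : Module.End ℂ (Fin n → ℂ)) x)) := by
      rw [Module.End.mul_apply, Module.End.mul_apply]
    rw [h1]
    have h2 : ((k.choose j : Module.End ℂ (Fin n → ℂ)) x) = (k.choose j : ℂ) • x := by
      rw [Module.End.natCast_apply]
      simp [Nat.cast_smul_eq_nsmul]
    have h3 : ((μ • 1 : Module.End ℂ (Fin n → ℂ)) ^ (k - j)) = μ ^ (k - j) • 1 := by
      rw [smul_pow, one_pow]
    rw [h2, h3]
    simp only [LinearMap.smul_apply, Module.End.one_apply]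
    rw [(a ^ j).map_smul, (a ^ j).map_smul, smul_smul, mul_comm]
  have hzero : ∀ j, m ≤ j → (a ^ j) x = 0 := by
    intro j hj
    have : a ^ j = a ^ (j - m) * a ^ m := by rw [← pow_add]; congr 1; omega
    rw [this, Module.End.mul_apply, hx, map_zero]
  set r := Complex.abs μ with hr
  have hm : ∀ k, m ≤ k → Complex.abs (((g ^ k) x) i)
      ≤ ∑ j ∈ Finset.range m, (k : ℝ) ^ j * r ^ (k - j) * Complex.abs (((a ^ j) x) i) := by
    intro k hk
    have hsub : Finset.range m ⊆ Finset.range (k + 1) := by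
      apply Finset.range_subset_range.2; omega
    have hrestrict : (g ^ k) x = ∑ j ∈ Finset.range m,
        ((k.choose j : ℂ) * μ ^ (k - j)) • ((a ^ j) x) := by
      rw [hsum k, ← Finset.sum_subset hsub]
      intro j hj hjm
      rw [hzero j (by simpa using hjm), smul_zero]
    have happ : ((g ^ k) x) i = ∑ j ∈ Finset.range m,
        ((k.choose j : ℂ) * μ ^ (k - j)) * (((a ^ j) x) i) := by
      rw [hrestrict]; simp
    rw [happ]
    refine (AbsoluteValue.sum_le _ _ _).trans ?_
    refine Finset.sum_le_sum fun j hj => ?_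
    rw [_root_.map_mul, _root_.map_mul, map_pow, Complex.abs_natCast]
    have hch : (k.choose j : ℝ) ≤ (k : ℝ) ^ j := by
      exact_mod_cast Nat.choose_le_pow k j
    have := AbsoluteValue.nonneg Complex.abs (((a ^ j) x) i)
    have hrp : (0:ℝ) ≤ r ^ (k - j) := pow_nonneg (AbsoluteValue.nonneg _ _) _
    calc (k.choose j : ℝ) * r ^ (k - j) * Complex.abs (((a ^ j) x) i)
        ≤ (k : ℝ) ^ j * r ^ (k - j) * Complex.abs (((a ^ j) x) i) := by
          apply mul_le_mul_of_nonneg_right _ this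
          exact mul_le_mul_of_nonneg_right hch hrp
      _ = _ := rfl
  have hbd : Filter.Tendsto (fun k : ℕ => ∑ j ∈ Finset.range m,
      (k : ℝ) ^ j * r ^ (k - j) * Complex.abs (((a ^ j) x) i)) Filter.atTop (nhds 0) := by
    have := tendsto_finset_sum (Finset.range m) (fun j _ =>
      (tendsto_pow_mul_pow_sub j (AbsoluteValue.nonneg _ _) habs).mul_const
        (Complex.abs (((a ^ j) x) i)))
    simpa [hr] using this
  apply squeeze_zero_norm' _ hbd
  filter_upwards [Filter.eventually_ge_atTop m] with k hk
  simpa using hm k hk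


lemma pow_eig {M : Matrix (Fin n) (Fin n) ℝ} {μ : ℂ} {z : Fin n → ℂ}
    (hz : (cm M).mulVecLin z = μ • z) (k : ℕ) :
    (((cm M).mulVecLin) ^ k) z = μ ^ k • z := by
  induction k with
  | zero => simp
  | succ k ih =>
    rw [pow_succ', Module.End.mul_apply, ih, ((cm M).mulVecLin).map_smul, hz, smul_smul, pow_succ']
    rw [mul_comm]

lemma key_complex (hn : 0 < n) {M : Matrix (Fin n) (Fin n) ℝ} (hM : Stoch M)
    (x : Fin n → ℂ) (i : Fin n) :
    Filter.Tendsto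
      (fun k => ((((cm M).mulVecLin) ^ k) ((1 - ((cm M).mulVecLin) ^ Nat.factorial n) x)) i)
      Filter.atTop (nhds 0) := by
  set g := (cm M).mulVecLin with hg
  set q : Module.End ℂ (Fin n → ℂ) := 1 - g ^ Nat.factorial n with hq
  have hx : x ∈ ⨆ μ : ℂ, Module.End.maxGenEigenspace g μ := by
    rw [Module.End.iSup_maxGenEigenspace_eq_top]; trivial
  suffices hmem : ∀ (μ : ℂ), ∀ z ∈ Module.End.maxGenEigenspace g μ,
      Filter.Tendsto (fun k => ((g ^ k) (q z)) i) Filter.atTop (nhds 0) by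
    exact Submodule.iSup_induction (motive := fun x =>
      Filter.Tendsto (fun k => ((g ^ k) (q x)) i) Filter.atTop (nhds 0))
      (fun μ : ℂ => Module.End.maxGenEigenspace g μ) hx hmem
      (by simp only [map_zero]; exact tendsto_const_nhds)
      (by
        intro y z hy hz
        have h := hy.add hz
        rw [add_zero] at h
        apply h.congr
        intro k
        simp [map_add])
  · -- membership case
    intro μ z hz
    obtain ⟨m, hm⟩ := (Module.End.mem_maxGenEigenspace g μ z).1 hz
    rcases lt_trichotomy (Complex.abs μ) 1 with hlt | heq | hgt
    · -- decay
      have hcom : Commute (g - μ • 1) q := by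
        refine (Commute.one_right _).sub_right ?_
        exact Commute.pow_right (((Commute.refl g).sub_left
          ((Commute.one_left g).smul_left μ))) (Nat.factorial n)
      have hqz : ((g - μ • 1) ^ m) (q z) = 0 := by
        rw [← Module.End.mul_apply, (hcom.pow_left m).eq, Module.End.mul_apply, hm, map_zero]
      exact decay hn hM hlt m (q z) hqz i
    · -- unit circle
      have heig : g z = μ • z := unit_gen_eig hn hM heq m z hm
      have heigM : cm M *ᵥ z = μ • z := by
        rw [← Matrix.mulVecLin_apply]; exact heig
      by_cases hz0 : z = 0
      · subst hz0
        simp only [map_zero]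
        exact tendsto_const_nhds
      · have hroot : μ ^ Nat.factorial n = 1 := eig_root hn hM heigM hz0 heq
        have hqz : q z = 0 := by
          rw [hq]
          simp only [LinearMap.sub_apply, Module.End.one_apply]
          rw [pow_eig heig, hroot, one_smul, sub_self]
        rw [hqz]
        simp only [map_zero]
        exact tendsto_const_nhds
    · -- abs > 1: z = 0
      have hz0 : z = 0 := by
        by_contra hz0
        obtain ⟨w, hw0, hw⟩ := gen_to_eig m z hm hz0
        exact absurd (eig_le_one hn hM hw hw0) (not_le.2 hgt)
      subst hz0
      simp only [map_zero]
      exact tendsto_const_nhds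

lemma key_real (hn : 0 < n) {M : Matrix (Fin n) (Fin n) ℝ} (hM : Stoch M)
    (y : Fin n → ℝ) (i : Fin n) :
    Filter.Tendsto (fun k => ((M ^ k) *ᵥ (y - (M ^ Nat.factorial n) *ᵥ y)) i)
      Filter.atTop (nhds 0) := by
  have hc := key_complex hn hM (fun j => (y j : ℂ)) i
  have hmv : ∀ (P : Matrix (Fin n) (Fin n) ℝ) (v : Fin n → ℝ) (j : Fin n),
      (cm P *ᵥ fun l => ((v l : ℝ) : ℂ)) j = (((P *ᵥ v) j : ℝ) : ℂ) := by
    intro P v j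
    simp [Matrix.mulVec, dotProduct, cm_apply]
  have hrw : ∀ k, ((((cm M).mulVecLin) ^ k)
        ((1 - ((cm M).mulVecLin) ^ Nat.factorial n) (fun j => ((y j : ℝ) : ℂ)))) i
      = ((((M ^ k) *ᵥ (y - (M ^ Nat.factorial n) *ᵥ y)) i : ℝ) : ℂ) := by
    intro k
    have h1 : ((1 - ((cm M).mulVecLin) ^ Nat.factorial n) (fun j => ((y j : ℝ) : ℂ)))
        = fun j => (((y - (M ^ Nat.factorial n) *ᵥ y) j : ℝ) : ℂ) := by
      funext j
      simp only [LinearMap.sub_apply, Module.End.one_apply, Pi.sub_apply]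
      rw [gpow_apply, hmv]
      push_cast
      ring
    rw [h1, gpow_apply]
    exact hmv (M ^ k) _ i
  have h2 : Filter.Tendsto
      (fun k => ((((M ^ k) *ᵥ (y - (M ^ Nat.factorial n) *ᵥ y)) i : ℝ) : ℂ))
      Filter.atTop (nhds 0) := hc.congr hrw
  have h3 := (Complex.continuous_re.tendsto 0).comp h2
  simpa [Function.comp_def] using h3


lemma foldl_eq {n : ℕ} (A : PFA Bool n) : ∀ (x : List Bool) (v : Fin n → ℝ),
    x.foldl (fun v σ => Matrix.vecMul v (A.M σ)) v = Matrix.vecMul v (x.map A.M).prod := by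
  intro x
  induction x with
  | nil => intro v; simp
  | cons σ xs ih =>
    intro v
    rw [List.foldl_cons, ih, List.map_cons, List.prod_cons, Matrix.vecMul_vecMul]

lemma probAcc_eq {n : ℕ} (A : PFA Bool n) (x : List Bool) :
    A.probAcc x = dotProduct A.ρ
      ((x.map A.M).prod *ᵥ fun i => if i ∈ A.F then (1:ℝ) else 0) := by
  rw [PFA.probAcc, foldl_eq, ← dotProduct_mulVec]

lemma prod_flatten_replicate {n : ℕ} (A : PFA Bool n) (w : List Bool) (k : ℕ) :
    (((List.replicate k w).flatten).map A.M).prod = ((w.map A.M).prod) ^ k := by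
  induction k with
  | zero => simp
  | succ k ih =>
    rw [List.replicate_succ, List.flatten_cons, List.map_append, List.prod_append, ih, pow_succ']

lemma main_aux {n : ℕ} (A : PFA Bool n) (w : List Bool) (k : ℕ) :
    A.probAcc ((List.replicate k w).flatten)
      = dotProduct A.ρ ((((w.map A.M).prod) ^ k) *ᵥ
          fun i => if i ∈ A.F then (1:ℝ) else 0) := by
  rw [probAcc_eq, prod_flatten_replicate]

end Stmt15Aux

open Matrix in
/-- For every `h ≥ 1` and prime `p`, every PFA over `{0,1}` that
recognizes `L(h,p)` with an isolated cut-point has at least `p` states. -/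
theorem stmt_15 (h p : ℕ) (hh : 1 ≤ h) (hp : p.Prime) (n : ℕ) (A : PFA Bool n)
    (lam ε : ℝ) (hlam : 0 < lam ∧ lam < 1) (hε : 0 < ε)
    (hrec : A.Recognizes (Lhp h p) lam ε) :
    p ≤ n := by
  by_contra hlt
  push_neg at hlt
  have hp2 := hp.two_le
  have hn : 0 < n := by
    rcases Nat.eq_zero_or_pos n with h0 | h0
    · exfalso
      have hs := A.ρ_sum
      subst h0
      simpa using hs
    · exact h0
  -- the word w = 0^b 1 0^h with |w| ≡ 1 (mod p)
  set b := p - h % p with hb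
  have hmodlt : h % p < p := Nat.mod_lt h (by omega)
  have hb1 : 1 ≤ b := by omega
  set w : List Bool := List.replicate b false ++ [true] ++ List.replicate h false with hw
  have hwblock : w ∈ blockLang h := ⟨0, b, hb1, by simp [hw]⟩
  have hwlen : w.length = p * (h / p + 1) + 1 := by
    have h1 : h % p + p * (h / p) = h := Nat.mod_add_div h p
    have h2 : w.length = b + 1 + h := by simp [hw]; omega
    have h3 : p * (h / p + 1) = p * (h / p) + p := by ring
    omega
  -- iterated words
  have hxstar : ∀ k : ℕ, (List.replicate k w).flatten ∈ kleeneStar (blockLang h) := by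
    intro k
    exact ⟨List.replicate k w,
      fun u hu => by rw [List.eq_of_mem_replicate hu]; exact hwblock, rfl⟩
  have hxlen : ∀ k : ℕ, ((List.replicate k w).flatten).length % p = k % p := by
    intro k
    have h1 : ((List.replicate k w).flatten).length = k * w.length := by
      rw [List.length_flatten, List.map_replicate, List.sum_replicate, smul_eq_mul]
    have h2 : k * w.length = p * (k * (h / p + 1)) + k := by rw [hwlen]; ring
    rw [h1, h2, Nat.mul_add_mod]
  have hmem : ∀ k : ℕ, k % p = 0 → (List.replicate k w).flatten ∈ Lhp h p := by
    intro k hk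
    exact ⟨hxstar k, by rw [hxlen k, hk]⟩
  have hnotmem : ∀ k : ℕ, k % p ≠ 0 → (List.replicate k w).flatten ∉ Lhp h p := by
    intro k hk hmem'
    exact hk (by rw [← hxlen k]; exact hmem'.2)
  -- matrices
  have hWs : Stmt15Aux.Stoch (w.map A.M).prod := by
    apply Stmt15Aux.Stoch.listProd
    intro P hP
    obtain ⟨σ, -, rfl⟩ := List.mem_map.1 hP
    exact ⟨A.M_nonneg σ, A.M_stochastic σ⟩
  have hpN : Nat.factorial n % p ≠ 0 := by
    intro hdvd
    have hdvd' : p ∣ Nat.factorial n := Nat.dvd_of_mod_eq_zero hdvd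
    rw [Nat.Prime.dvd_factorial hp] at hdvd'
    omega
  -- the gap
  have hgap : ∀ t : ℕ, 2 * ε ≤ dotProduct A.ρ
      (((w.map A.M).prod ^ (p * t)) *ᵥ
        ((fun i => if i ∈ A.F then (1:ℝ) else 0)
          - ((w.map A.M).prod ^ Nat.factorial n) *ᵥ fun i => if i ∈ A.F then (1:ℝ) else 0)) := by
    intro t
    have h1 : lam + ε ≤ A.probAcc ((List.replicate (p * t) w).flatten) :=
      hrec.1 _ (hmem _ (Nat.mul_mod_right p t))
    have h2 : A.probAcc ((List.replicate (p * t + Nat.factorial n) w).flatten) ≤ lam - ε :=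
      hrec.2 _ (hnotmem _ (by rw [Nat.mul_add_mod]; exact hpN))
    rw [Stmt15Aux.main_aux] at h1 h2
    have h3 : ((w.map A.M).prod ^ (p * t)) *ᵥ
        ((fun i => if i ∈ A.F then (1:ℝ) else 0)
          - ((w.map A.M).prod ^ Nat.factorial n) *ᵥ fun i => if i ∈ A.F then (1:ℝ) else 0)
        = ((w.map A.M).prod ^ (p * t)) *ᵥ (fun i => if i ∈ A.F then (1:ℝ) else 0)
          - ((w.map A.M).prod ^ (p * t + Nat.factorial n)) *ᵥ
              fun i => if i ∈ A.F then (1:ℝ) else 0 := by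
      rw [Matrix.mulVec_sub, Matrix.mulVec_mulVec, ← pow_add]
    rw [h3, dotProduct_sub]
    linarith
  -- convergence to zero
  have htend : Filter.Tendsto (fun k : ℕ => dotProduct A.ρ
      (((w.map A.M).prod ^ k) *ᵥ
        ((fun i => if i ∈ A.F then (1:ℝ) else 0)
          - ((w.map A.M).prod ^ Nat.factorial n) *ᵥ fun i => if i ∈ A.F then (1:ℝ) else 0)))
      Filter.atTop (nhds 0) := by
    have hsum := tendsto_finset_sum (Finset.univ : Finset (Fin n)) (fun i _ =>
      (Stmt15Aux.key_real hn hWs (fun i => if i ∈ A.F then (1:ℝ) else 0) i).const_mul (A.ρ i))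
    simpa [dotProduct] using hsum
  have hcomp : Filter.Tendsto (fun t : ℕ => dotProduct A.ρ
      (((w.map A.M).prod ^ (p * t)) *ᵥ
        ((fun i => if i ∈ A.F then (1:ℝ) else 0)
          - ((w.map A.M).prod ^ Nat.factorial n) *ᵥ fun i => if i ∈ A.F then (1:ℝ) else 0)))
      Filter.atTop (nhds 0) := by
    apply htend.comp
    apply Filter.tendsto_atTop_mono (fun t => Nat.le_mul_of_pos_left t (by omega : 0 < p))
    exact Filter.tendsto_id
  have hfin : 2 * ε ≤ 0 := ge_of_tendsto' hcomp hgap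
  linarith

end
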